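/- Let R be a strongly right C4*-ring. Assume that R = Σ × T for rings Σ and T, where Σ is semisimple artinian, the right regular module T_T is summand-square-free, T satisfies the left square-free transfer condition LSF, and the left regular module _TT is semi-weak-CS. Then R is a strongly left C4*-ring. -/

import Mathlib

open MulOpposite

section C4Defs

/-- A submodule is a direct summand if it has a complement. -/
def IsDirectSummand {R M : Type*} [Ring R] [AddCommGroup M] [Module R M]
    (A : Submodule R M) : Prop :=
  ∃ B : Submodule R M, IsCompl A B

/-- `M` is a `C4`-module over `R`: for every internal direct sum decomposition `M = A ⊕ B`
and every homomorphism `f : A → B` whose kernel is a direct summand of `A`, the image of `f`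
is a direct summand of `B`. -/
def IsC4Module (R M : Type*) [Ring R] [AddCommGroup M] [Module R M] : Prop :=
  ∀ A B : Submodule R M, IsCompl A B → ∀ f : A →ₗ[R] B,
    IsDirectSummand (LinearMap.ker f) → IsDirectSummand (LinearMap.range f)

/-- `M` is a `C4*`-module: every submodule of `M` is a `C4`-module. -/
def IsC4StarModule (R M : Type*) [Ring R] [AddCommGroup M] [Module R M] : Prop :=
  ∀ N : Submodule R M, IsC4Module R N

/-- `M` is square-free: no nonzero submodules `A`, `B` with `A ⊓ B = ⊥` and `A ≅ B`. -/
def IsSquareFreeModule (R M : Type*) [Ring R] [AddCommGroup M] [Module R M] : Prop :=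
  ∀ A B : Submodule R M, A ≠ ⊥ → B ≠ ⊥ → A ⊓ B = ⊥ → IsEmpty (A ≃ₗ[R] B)

/-- `M` is summand-square-free: no nonzero direct summands `A`, `B` with `A ⊓ B = ⊥`
and `A ≅ B`. -/
def IsSummandSquareFree (R M : Type*) [Ring R] [AddCommGroup M] [Module R M] : Prop :=
  ∀ A B : Submodule R M, IsDirectSummand A → IsDirectSummand B →
    A ≠ ⊥ → B ≠ ⊥ → A ⊓ B = ⊥ → IsEmpty (A ≃ₗ[R] B)

/-- `X` is an essential submodule of `A`. -/
def IsEssentialIn {R M : Type*} [Ring R] [AddCommGroup M] [Module R M]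
    (X A : Submodule R M) : Prop :=
  X ≤ A ∧ ∀ N : Submodule R M, N ≤ A → N ≠ ⊥ → X ⊓ N ≠ ⊥

/-- A triple `(X, Y, f)` where `X`, `Y` are semisimple direct summands of `M` with
`X ⊓ Y = ⊥` and `f : X ≅ Y` an isomorphism.  These are the elements of the poset `S(M)`
from the definition of semi-weak-CS modules. -/
structure SWTriple (R M : Type*) [Ring R] [AddCommGroup M] [Module R M] where
  X : Submodule R M
  Y : Submodule R M
  semisimpleX : IsSemisimpleModule R X
  semisimpleY : IsSemisimpleModule R Y
  summandX : IsDirectSummand X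
  summandY : IsDirectSummand Y
  disj : X ⊓ Y = ⊥
  f : X ≃ₗ[R] Y

/-- The extension order on the poset `S(M)` of triples: `(X₁,Y₁,f₁) ≤ (X₂,Y₂,f₂)` iff
`X₁ ≤ X₂`, `Y₁ ≤ Y₂` and `f₂` restricts to `f₁` on `X₁`. -/
def SWTriple.Extends {R M : Type*} [Ring R] [AddCommGroup M] [Module R M]
    (t s : SWTriple R M) : Prop :=
  ∃ hX : t.X ≤ s.X, t.Y ≤ s.Y ∧
    ∀ x : t.X, (s.f ⟨x.1, hX x.2⟩ : M) = (t.f x : M)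

/-- `M` is semi-weak-CS: for every chain in the poset `S(M)`, with `X` the union of the first
components and `Y` the union of the second components, there are direct summands `A`, `B`
of `M` with `X` essential in `A` and `Y` essential in `B`. -/
def IsSemiWeakCS (R M : Type*) [Ring R] [AddCommGroup M] [Module R M] : Prop :=
  ∀ C : Set (SWTriple R M), IsChain SWTriple.Extends C →
    ∃ A B : Submodule R M, IsDirectSummand A ∧ IsDirectSummand B ∧
      IsEssentialIn (⨆ t ∈ C, t.X) A ∧ IsEssentialIn (⨆ t ∈ C, t.Y) B

/-- `M` is strongly `C4*` if it is both semi-weak-CS and `C4*`. -/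
def IsStronglyC4StarModule (R M : Type*) [Ring R] [AddCommGroup M] [Module R M] : Prop :=
  IsSemiWeakCS R M ∧ IsC4StarModule R M

/-- `R` is a right `C4*`-ring: the right regular module `R_R` (i.e. `R` as a module over
`Rᵐᵒᵖ`) is a `C4*`-module. -/
def IsRightC4StarRing (R : Type*) [Ring R] : Prop := IsC4StarModule Rᵐᵒᵖ R

/-- `R` is a left `C4*`-ring: the left regular module `_RR` is a `C4*`-module. -/
def IsLeftC4StarRing (R : Type*) [Ring R] : Prop := IsC4StarModule R R

/-- `R` is a strongly right `C4*`-ring. -/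
def IsStronglyRightC4StarRing (R : Type*) [Ring R] : Prop := IsStronglyC4StarModule Rᵐᵒᵖ R

/-- `R` is a strongly left `C4*`-ring. -/
def IsStronglyLeftC4StarRing (R : Type*) [Ring R] : Prop := IsStronglyC4StarModule R R

/-- `R` is right semi-weak-CS. -/
def IsRightSemiWeakCSRing (R : Type*) [Ring R] : Prop := IsSemiWeakCS Rᵐᵒᵖ R

/-- `R` is left semi-weak-CS. -/
def IsLeftSemiWeakCSRing (R : Type*) [Ring R] : Prop := IsSemiWeakCS R R

/-- The left square-free transfer condition `LSF`: if the right regular module `T_T` is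
summand-square-free then the left regular module `_TT` is square-free. -/
def LSF (T : Type*) [Ring T] : Prop :=
  IsSummandSquareFree Tᵐᵒᵖ T → IsSquareFreeModule T T

end C4Defs

section Corner

variable {T : Type*} [Ring T]

/-- The corner `eTe = {x : T | e * x = x ∧ x * e = x}` as a non-unital subring. -/
def cornerSubring (e : T) : NonUnitalSubring T where
  carrier := {x : T | e * x = x ∧ x * e = x}
  add_mem' := by
    rintro a b ⟨ha1, ha2⟩ ⟨hb1, hb2⟩
    exact ⟨by rw [mul_add, ha1, hb1], by rw [add_mul, ha2, hb2]⟩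
  zero_mem' := ⟨mul_zero e, zero_mul e⟩
  neg_mem' := by
    rintro a ⟨ha1, ha2⟩
    exact ⟨by rw [mul_neg, ha1], by rw [neg_mul, ha2]⟩
  mul_mem' := by
    rintro a b ⟨ha1, ha2⟩ ⟨hb1, hb2⟩
    exact ⟨by rw [← mul_assoc, ha1], by rw [mul_assoc, hb2]⟩

theorem mem_cornerSubring {e x : T} :
    x ∈ cornerSubring e ↔ e * x = x ∧ x * e = x := Iff.rfl

/-- The corner ring `eTe` associated to an idempotent `e` of `T`; its identity is `e`. -/
def Corner (e : T) (he : IsIdempotentElem e) : Type _ := ↥(cornerSubring e)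

instance {e : T} {he : IsIdempotentElem e} : Ring (Corner e he) :=
  { (inferInstance : NonUnitalRing ↥(cornerSubring e)) with
    one := ⟨e, he, he⟩
    one_mul := fun x => Subtype.ext (mem_cornerSubring.mp x.2).1
    mul_one := fun x => Subtype.ext (mem_cornerSubring.mp x.2).2 }

/-- `eT = {x : T | e * x = x}` as an additive subgroup; it is a left module over the
corner ring `eTe`. -/
def leftPart (e : T) : AddSubgroup T where
  carrier := {x : T | e * x = x}
  add_mem' := by
    intro a b ha hb
    simp only [Set.mem_setOf_eq] at *
    rw [mul_add, ha, hb]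
  zero_mem' := mul_zero e
  neg_mem' := by
    intro a ha
    simp only [Set.mem_setOf_eq] at *
    rw [mul_neg, ha]

/-- `Te = {x : T | x * e = x}` as an additive subgroup; it is a right module over the
corner ring `eTe`. -/
def rightPart (e : T) : AddSubgroup T where
  carrier := {x : T | x * e = x}
  add_mem' := by
    intro a b ha hb
    simp only [Set.mem_setOf_eq] at *
    rw [add_mul, ha, hb]
  zero_mem' := zero_mul e
  neg_mem' := by
    intro a ha
    simp only [Set.mem_setOf_eq] at *
    rw [neg_mul, ha]

theorem mem_leftPart {e x : T} : x ∈ leftPart e ↔ e * x = x := Iff.rfl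

theorem mem_rightPart {e x : T} : x ∈ rightPart e ↔ x * e = x := Iff.rfl

/-- `eT` is a (unital) left module over the corner ring `eTe`. -/
instance {e : T} {he : IsIdempotentElem e} : Module (Corner e he) ↥(leftPart e) where
  smul c x := ⟨c.1 * x.1, by
    have h1 : e * c.1 = c.1 := (mem_cornerSubring.mp c.2).1
    show e * (c.1 * x.1) = c.1 * x.1
    rw [← mul_assoc, h1]⟩
  one_smul x := Subtype.ext (by
    show e * x.1 = x.1
    exact mem_leftPart.mp x.2)
  mul_smul a b x := Subtype.ext (by
    show (a.1 * b.1) * x.1 = a.1 * (b.1 * x.1)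
    rw [mul_assoc])
  smul_zero a := Subtype.ext (by
    show a.1 * 0 = 0
    exact mul_zero _)
  smul_add a x y := Subtype.ext (by
    show a.1 * (x.1 + y.1) = a.1 * x.1 + a.1 * y.1
    exact mul_add _ _ _)
  add_smul a b x := Subtype.ext (by
    show (a.1 + b.1) * x.1 = a.1 * x.1 + b.1 * x.1
    exact add_mul _ _ _)
  zero_smul x := Subtype.ext (by
    show (0 : T) * x.1 = 0
    exact zero_mul _)

/-- `Te` is a (unital) right module over the corner ring `eTe`, i.e. a module over
`(eTe)ᵐᵒᵖ`. -/
instance {e : T} {he : IsIdempotentElem e} : Module (Corner e he)ᵐᵒᵖ ↥(rightPart e) where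
  smul c x := ⟨x.1 * (unop c).1, by
    have h2 : (unop c).1 * e = (unop c).1 := (mem_cornerSubring.mp (unop c).2).2
    show (x.1 * (unop c).1) * e = x.1 * (unop c).1
    rw [mul_assoc, h2]⟩
  one_smul x := Subtype.ext (by
    show x.1 * e = x.1
    exact mem_rightPart.mp x.2)
  mul_smul a b x := Subtype.ext (by
    show x.1 * ((unop b).1 * (unop a).1) = (x.1 * (unop b).1) * (unop a).1
    rw [mul_assoc])
  smul_zero a := Subtype.ext (by
    show (0 : T) * (unop a).1 = 0
    exact zero_mul _)
  smul_add a x y := Subtype.ext (by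
    show (x.1 + y.1) * (unop a).1 = x.1 * (unop a).1 + y.1 * (unop a).1
    exact add_mul _ _ _)
  add_smul a b x := Subtype.ext (by
    show x.1 * ((unop a).1 + (unop b).1) = x.1 * (unop a).1 + x.1 * (unop b).1
    exact mul_add _ _ _)
  zero_smul x := Subtype.ext (by
    show x.1 * (0 : T) = 0
    exact mul_zero _)

/-- The hereditary side-transfer condition `HST`: for every idempotent `e` of `T`, if the
module `eT`/`Te` is summand-square-free as a right `eTe`-module (formalized on the carrier
`Te = rightPart e`, which carries the unital right `eTe`-action; at `e = 1` this is the right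
regular module `T_T`), then the left `eTe`-module (carrier `eT = leftPart e`, carrying the
unital left `eTe`-action; at `e = 1` this is the left regular module `_TT`) is square-free. -/
def HST (T : Type*) [Ring T] : Prop :=
  ∀ (e : T) (he : IsIdempotentElem e),
    IsSummandSquareFree (Corner e he)ᵐᵒᵖ ↥(rightPart e) →
      IsSquareFreeModule (Corner e he) ↥(leftPart e)

/-- The corner-stability axiom `CSA`: for every idempotent `e` of `T`, the left regular
module of the corner ring `eTe` is semi-weak-CS. -/
def CSA' (T : Type*) [Ring T] : Prop :=
  ∀ (e : T) (he : IsIdempotentElem e),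
    IsSemiWeakCS (Corner e he) (Corner e he)

end Corner

section SymmetryDatum

/-- A right-to-left symmetry datum on `R`: a ring decomposition `R ≅ S × T` where `S` is
semisimple artinian, the right regular module `T_T` is summand-square-free, the two ideals
`S`, `T` are orthogonal as right `R`-modules (no nonzero isomorphic right `R`-submodules),
and `T` satisfies `HST` and `CSA`. -/
structure RightToLeftSymmetryDatum (R S T : Type*) [Ring R] [Ring S] [Ring T] where
  iso : R ≃+* S × T
  semisimpleArtinian : IsSemisimpleRing S
  ssf : IsSummandSquareFree Tᵐᵒᵖ T
  orthogonal : ∀ A B : Submodule Rᵐᵒᵖ R,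
    (∀ a ∈ A, (iso a).2 = 0) → (∀ b ∈ B, (iso b).1 = 0) →
    A ≠ ⊥ → B ≠ ⊥ → IsEmpty (A ≃ₗ[Rᵐᵒᵖ] B)
  hst : HST T
  csa : CSA' T

end SymmetryDatum

section Beta

variable (R : Type*) [Ring R]

/-- The right annihilator `r_R(P) = {s : R | P s = 0}` of a right submodule `P` of `R`. -/
def rightAnnSet (P : Submodule Rᵐᵒᵖ R) : Set R := {s : R | ∀ p ∈ P, p * s = 0}

/-- The annihilator-bidual `β_r(P) = ℓ_R(r_R(P))`, as a right ideal of `R`. -/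
def betaR (P : Submodule Rᵐᵒᵖ R) : Submodule Rᵐᵒᵖ R where
  carrier := {r : R | ∀ s ∈ rightAnnSet R P, r * s = 0}
  add_mem' := by
    intro a b ha hb
    intro s hs
    rw [add_mul, ha s hs, hb s hs, add_zero]
  zero_mem' := by
    intro s hs
    exact zero_mul s
  smul_mem' := by
    intro c x hx s hs
    show (x * unop c) * s = 0
    rw [mul_assoc]
    refine hx _ ?_
    intro p hp
    rw [← mul_assoc]
    exact hs (p * unop c) (Submodule.smul_mem P c hp)

/-- A right ideal is a two-sided ideal which is a ring direct summand of `R` iff it is of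
the form `cR` for a central idempotent `c`. -/
def IsRingDirectSummandIdeal {R : Type*} [Ring R] (I : Submodule Rᵐᵒᵖ R) : Prop :=
  ∃ c : R, IsIdempotentElem c ∧ (∀ r : R, c * r = r * c) ∧ (∀ x : R, x ∈ I ↔ c * x = x)

/-- `R` has right semisimple annihilator asymmetry. -/
def HasRightSemisimpleAnnihilatorAsymmetry (R : Type*) [Ring R] : Prop :=
  ∃ P : Submodule Rᵐᵒᵖ R, IsSemisimpleModule Rᵐᵒᵖ P ∧ IsDirectSummand P ∧
    (¬ IsSemisimpleModule Rᵐᵒᵖ (betaR R P) ∨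
     (IsSemisimpleModule Rᵐᵒᵖ (betaR R P) ∧ ¬ IsRingDirectSummandIdeal (betaR R P)) ∨
     ¬ IsEssentialIn P (betaR R P))

end Beta

namespace C4Aux

variable {R M : Type*} [Ring R] [AddCommGroup M] [Module R M]

variable (M) in
/-- the `e`-part `{x | e • x = x}` of a module, for `e` a central element. -/
def part1 (e : R) (hc : ∀ r : R, e * r = r * e) : Submodule R M where
  carrier := {x | e • x = x}
  add_mem' := by
    intro a b ha hb
    simp only [Set.mem_setOf_eq] at *
    rw [smul_add, ha, hb]
  zero_mem' := smul_zero e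
  smul_mem' := by
    intro r x hx
    simp only [Set.mem_setOf_eq] at *
    rw [← mul_smul, hc, mul_smul, hx]

variable (M) in
/-- the complementary part `{x | e • x = 0}`. -/
def part2 (e : R) (hc : ∀ r : R, e * r = r * e) : Submodule R M where
  carrier := {x | e • x = 0}
  add_mem' := by
    intro a b ha hb
    simp only [Set.mem_setOf_eq] at *
    rw [smul_add, ha, hb, add_zero]
  zero_mem' := smul_zero e
  smul_mem' := by
    intro r x hx
    simp only [Set.mem_setOf_eq] at *
    rw [← mul_smul, hc, mul_smul, hx, smul_zero]

variable {e : R} {hc : ∀ r : R, e * r = r * e}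

theorem mem_part1 {x : M} : x ∈ part1 M e hc ↔ e • x = x := Iff.rfl
theorem mem_part2 {x : M} : x ∈ part2 M e hc ↔ e • x = 0 := Iff.rfl

theorem part1_inf_part2 : part1 M e hc ⊓ part2 M e hc = ⊥ := by
  ext x
  simp only [Submodule.mem_inf, mem_part1, mem_part2, Submodule.mem_bot]
  constructor
  · rintro ⟨h1, h2⟩; rw [← h1, h2]
  · rintro rfl; simp

theorem smul_mem_part1 (he : e * e = e) (x : M) : e • x ∈ part1 M e hc := by
  show e • e • x = e • x
  rw [← mul_smul, he]

theorem sub_smul_mem_part2 (he : e * e = e) (x : M) : x - e • x ∈ part2 M e hc := by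
  show e • (x - e • x) = 0
  rw [smul_sub, ← mul_smul, he, sub_self]

theorem split_sup (he : e * e = e) (N : Submodule R M) :
    (N ⊓ part1 M e hc) ⊔ (N ⊓ part2 M e hc) = N := by
  refine le_antisymm (sup_le inf_le_left inf_le_left) ?_
  intro x hx
  have h1 : e • x ∈ N ⊓ part1 M e hc := ⟨N.smul_mem e hx, smul_mem_part1 he x⟩
  have h2 : x - e • x ∈ N ⊓ part2 M e hc :=
    ⟨N.sub_mem hx (N.smul_mem e hx), sub_smul_mem_part2 he x⟩
  have := Submodule.add_mem_sup h1 h2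
  simpa using this

theorem le_part1_of (he : e * e = e) {N : Submodule R M} (h : N ⊓ part2 M e hc = ⊥) :
    N ≤ part1 M e hc := by
  intro x hx
  have hx' : x ∈ (N ⊓ part1 M e hc) ⊔ (N ⊓ part2 M e hc) := by
    rw [split_sup he N]; exact hx
  rw [h, sup_bot_eq] at hx'
  exact hx'.2

theorem inf_part1_of_le (he : e * e = e) {P₁ P₂ : Submodule R M}
    (h1 : P₁ ≤ part1 M e hc) (h2 : P₂ ≤ part2 M e hc) :
    (P₁ ⊔ P₂) ⊓ part1 M e hc = P₁ := by
  ext x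
  constructor
  · rintro ⟨hx1, hx2⟩
    obtain ⟨p, hp, q, hq, rfl⟩ := Submodule.mem_sup.mp hx1
    have : e • (p + q) = p := by
      rw [smul_add, mem_part1.mp (h1 hp), mem_part2.mp (h2 hq), add_zero]
    rw [← mem_part1.mp hx2, this]
    exact hp
  · intro hx
    exact ⟨Submodule.mem_sup_left hx, h1 hx⟩

theorem inf_part2_of_le (he : e * e = e) {P₁ P₂ : Submodule R M}
    (h1 : P₁ ≤ part1 M e hc) (h2 : P₂ ≤ part2 M e hc) :
    (P₁ ⊔ P₂) ⊓ part2 M e hc = P₂ := by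
  ext x
  constructor
  · rintro ⟨hx1, hx2⟩
    obtain ⟨p, hp, q, hq, rfl⟩ := Submodule.mem_sup.mp hx1
    have : e • (p + q) = p := by
      rw [smul_add, mem_part1.mp (h1 hp), mem_part2.mp (h2 hq), add_zero]
    rw [mem_part2.mp hx2] at this
    have hq' : p + q = q := by rw [← this, zero_add]
    rw [hq']
    exact hq
  · intro hx
    exact ⟨Submodule.mem_sup_right hx, h2 hx⟩

theorem isCompl_parts (he : e * e = e) {P₁ Q₁ P₂ Q₂ : Submodule R M}
    (hP₁ : P₁ ≤ part1 M e hc) (hQ₁ : Q₁ ≤ part1 M e hc)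
    (hP₂ : P₂ ≤ part2 M e hc) (hQ₂ : Q₂ ≤ part2 M e hc)
    (d1 : P₁ ⊓ Q₁ = ⊥) (d2 : P₂ ⊓ Q₂ = ⊥)
    (s1 : P₁ ⊔ Q₁ = part1 M e hc) (s2 : P₂ ⊔ Q₂ = part2 M e hc) :
    IsCompl (P₁ ⊔ P₂) (Q₁ ⊔ Q₂) := by
  constructor
  · rw [disjoint_iff, eq_bot_iff]
    rintro x ⟨hx1, hx2⟩
    obtain ⟨p1, hp1, p2, hp2, hx⟩ := Submodule.mem_sup.mp hx1
    obtain ⟨q1, hq1, q2, hq2, hx'⟩ := Submodule.mem_sup.mp hx2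
    have key : p1 - q1 = q2 - p2 := by
      have h0 : p1 + p2 = q1 + q2 := by rw [hx, hx']
      have : (p1 - q1) - (q2 - p2) = (p1 + p2) - (q1 + q2) := by abel
      rw [h0, sub_self] at this
      exact sub_eq_zero.mp this
    have h12 : p1 - q1 ∈ part1 M e hc ⊓ part2 M e hc :=
      ⟨Submodule.sub_mem _ (hP₁ hp1) (hQ₁ hq1),
       key ▸ Submodule.sub_mem _ (hQ₂ hq2) (hP₂ hp2)⟩
    rw [part1_inf_part2] at h12
    have hp1q1 : p1 = q1 := by
      have := (Submodule.mem_bot R).mp h12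
      exact sub_eq_zero.mp this
    have hp2q2 : p2 = q2 := by
      have : q2 - p2 = 0 := by rw [← key, hp1q1, sub_self]
      exact (sub_eq_zero.mp this).symm
    have e1 : p1 ∈ P₁ ⊓ Q₁ := ⟨hp1, hp1q1 ▸ hq1⟩
    have e2 : p2 ∈ P₂ ⊓ Q₂ := ⟨hp2, hp2q2 ▸ hq2⟩
    rw [d1] at e1
    rw [d2] at e2
    have : x = 0 := by
      rw [← hx, (Submodule.mem_bot R).mp e1, (Submodule.mem_bot R).mp e2, add_zero]
    simp [this]
  · rw [codisjoint_iff]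
    have : (P₁ ⊔ P₂) ⊔ (Q₁ ⊔ Q₂) = (P₁ ⊔ Q₁) ⊔ (P₂ ⊔ Q₂) := by
      rw [sup_assoc, sup_assoc]
      congr 1
      rw [← sup_assoc, ← sup_assoc, sup_comm P₂ Q₁]
    rw [this, s1, s2]
    have := split_sup (M := M) (hc := hc) he ⊤
    simpa using this

/-- Every submodule `P` of `W` has a complement within `W`. -/
def ComplementedWithin (W : Submodule R M) : Prop :=
  ∀ P ≤ W, ∃ Q, Q ≤ W ∧ P ⊓ Q = ⊥ ∧ P ⊔ Q = W

/-- No pair of nonzero disjoint isomorphic submodules inside `W`. -/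
def NoIsoPairWithin (W : Submodule R M) : Prop :=
  ∀ P Q : Submodule R M, P ≤ W → Q ≤ W → P ≠ ⊥ → Q ≠ ⊥ → P ⊓ Q = ⊥ →
    IsEmpty (P ≃ₗ[R] Q)

theorem ComplementedWithin.of_le {W W' : Submodule R M} (h : ComplementedWithin W)
    (hle : W' ≤ W) : ComplementedWithin W' := by
  intro P hP
  obtain ⟨Q, hQW, hd, hs⟩ := h P (hP.trans hle)
  refine ⟨Q ⊓ W', inf_le_right, ?_, ?_⟩
  · rw [eq_bot_iff, ← hd]
    exact le_inf inf_le_left (inf_le_right.trans inf_le_left)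
  · rw [← sup_inf_assoc_of_le Q hP, hs]
    exact inf_eq_right.mpr hle

theorem c4_of_parts (he : e * e = e)
    (h1 : ComplementedWithin (part1 M e hc))
    (h2 : NoIsoPairWithin (part2 M e hc)) : IsC4Module R M := by
  rintro A B hAB f ⟨K, hK⟩
  set K' : Submodule R M := K.map A.subtype with hK'def
  have hK'A : K' ≤ A := Submodule.map_subtype_le A K
  -- Step 1 : K' ⊓ part2 = ⊥
  have step1 : K' ⊓ part2 M e hc = ⊥ := by
    by_contra hne
    set P : Submodule R M := K' ⊓ part2 M e hc with hPdef
    have hPA : P ≤ A := le_trans inf_le_left hK'A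
    set φ : P →ₗ[R] M := B.subtype ∘ₗ f ∘ₗ Submodule.inclusion hPA with hφ
    have hker : LinearMap.ker φ = ⊥ := by
      rw [eq_bot_iff]
      intro x hx
      have hfx : f (Submodule.inclusion hPA x) = 0 := by
        apply Subtype.ext
        exact hx
      have hxK : Submodule.inclusion hPA x ∈ K := by
        have hx1 : (x : M) ∈ K' := x.2.1
        obtain ⟨k, hk, hk2⟩ := hx1
        have : Submodule.inclusion hPA x = k := Subtype.ext hk2.symm
        rw [this]; exact hk
      have hmem : Submodule.inclusion hPA x ∈ LinearMap.ker f ⊓ K :=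
        ⟨LinearMap.mem_ker.mpr hfx, hxK⟩
      rw [disjoint_iff.mp hK.disjoint] at hmem
      have : (x : M) = 0 := congrArg Subtype.val ((Submodule.mem_bot R).mp hmem)
      exact (Submodule.mem_bot R).mpr (Subtype.ext this)
    have hinj : Function.Injective φ := LinearMap.ker_eq_bot.mp hker
    set Q : Submodule R M := LinearMap.range φ with hQdef
    have hQ2 : Q ≤ part2 M e hc := by
      rintro y ⟨x, rfl⟩
      have hx2 : e • (x : M) = 0 := x.2.2
      show e • φ x = 0
      rw [← map_smul]
      have hx0 : e • x = (0 : P) := Subtype.ext (by simpa using hx2)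
      rw [hx0, map_zero]
    have hQB : Q ≤ B := by
      rintro y ⟨x, rfl⟩
      exact (f (Submodule.inclusion hPA x)).2
    have hPQ : P ⊓ Q = ⊥ := by
      rw [eq_bot_iff]
      rintro z ⟨hz1, hz2⟩
      have : z ∈ A ⊓ B := ⟨hPA hz1, hQB hz2⟩
      rw [disjoint_iff.mp hAB.disjoint] at this
      exact this
    have hQne : Q ≠ ⊥ := by
      intro hQb
      apply hne
      rw [eq_bot_iff]
      intro x hx
      have h0 : φ ⟨x, hx⟩ = 0 := by
        have : φ ⟨x, hx⟩ ∈ Q := LinearMap.mem_range_self φ ⟨x, hx⟩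
        rw [hQb] at this
        exact (Submodule.mem_bot R).mp this
      have h1 : (⟨x, hx⟩ : P) = 0 := by
        apply hinj
        rw [h0, map_zero]
      have : x = 0 := congrArg Subtype.val h1
      exact (Submodule.mem_bot R).mpr this
    exact (h2 P Q inf_le_right hQ2 hne hQne hPQ).false
      (LinearEquiv.ofInjective φ hinj)
  have step2 : K' ≤ part1 M e hc := le_part1_of he step1
  set rngM : Submodule R M := (LinearMap.range f).map B.subtype with hrngdef
  have hrng1 : rngM ≤ part1 M e hc := by
    rintro y hy
    obtain ⟨b, hb, rfl⟩ := hy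
    obtain ⟨a, rfl⟩ := hb
    have ha : a ∈ LinearMap.ker f ⊔ K := by
      rw [codisjoint_iff.mp hK.codisjoint]; trivial
    obtain ⟨u, hu, v, hv, rfl⟩ := Submodule.mem_sup.mp ha
    have hfv : f (u + v) = f v := by
      rw [map_add, LinearMap.mem_ker.mp hu, zero_add]
    rw [hfv]
    have hv1 : (v : M) ∈ part1 M e hc := step2 (Submodule.mem_map_of_mem hv)
    have hev : e • v = v := Subtype.ext (by simpa using mem_part1.mp hv1)
    have h5 : e • f v = f v := by rw [← map_smul, hev]
    show e • ((f v : B) : M) = ((f v : B) : M)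
    have := congrArg Subtype.val h5
    simpa using this
  have hrngB : rngM ≤ B := Submodule.map_subtype_le B (LinearMap.range f)
  obtain ⟨W, hWle, hWd, hWs⟩ :=
    (h1.of_le (inf_le_right : B ⊓ part1 M e hc ≤ part1 M e hc)) rngM (le_inf hrngB hrng1)
  set D : Submodule R M := W ⊔ (B ⊓ part2 M e hc) with hDdef
  have hDB : D ≤ B := sup_le (hWle.trans inf_le_left) inf_le_left
  have hd : rngM ⊓ D = ⊥ := by
    rw [eq_bot_iff]
    rintro x ⟨hx1, hx2⟩
    obtain ⟨w, hw, z, hz, rfl⟩ := Submodule.mem_sup.mp hx2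
    have hw1 : w ∈ part1 M e hc := (hWle hw).2
    have hz1 : z ∈ part1 M e hc := by
      have : z = (w + z) - w := by abel
      rw [this]
      exact Submodule.sub_mem _ (hrng1 hx1) hw1
    have hz0 : z = 0 := by
      have : z ∈ part1 M e hc ⊓ part2 M e hc := ⟨hz1, hz.2⟩
      rw [part1_inf_part2] at this
      exact (Submodule.mem_bot R).mp this
    have : w + z ∈ rngM ⊓ W := by
      constructor
      · exact hx1
      · rw [hz0, add_zero]; exact hw
    rw [hWd] at this
    exact this
  have hs : rngM ⊔ D = B := by
    rw [hDdef, ← sup_assoc, hWs]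
    exact split_sup he B
  refine ⟨Submodule.comap B.subtype D, ?_, ?_⟩
  · rw [disjoint_iff, eq_bot_iff]
    rintro x ⟨hx1, hx2⟩
    have : (x : M) ∈ rngM ⊓ D := ⟨Submodule.mem_map_of_mem hx1, hx2⟩
    rw [hd] at this
    exact (Submodule.mem_bot R).mpr (Subtype.ext ((Submodule.mem_bot R).mp this))
  · rw [codisjoint_iff, eq_top_iff]
    rintro b -
    have hb : (b : M) ∈ rngM ⊔ D := by rw [hs]; exact b.2
    obtain ⟨m, hm, dd, hdd, hmd⟩ := Submodule.mem_sup.mp hb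
    obtain ⟨m', hm', rfl⟩ := hm
    have hddB : dd ∈ B := hDB hdd
    have hb' : b = m' + ⟨dd, hddB⟩ := Subtype.ext (by rw [← hmd]; rfl)
    rw [hb']
    exact Submodule.add_mem_sup hm' hdd

theorem part1_comap (N : Submodule R M) :
    part1 N e hc = (part1 M e hc).comap N.subtype := by
  ext x
  simp only [mem_part1, Submodule.mem_comap, Submodule.coe_subtype]
  rw [Subtype.ext_iff]
  rfl

theorem part2_comap (N : Submodule R M) :
    part2 N e hc = (part2 M e hc).comap N.subtype := by
  ext x
  simp only [mem_part2, Submodule.mem_comap, Submodule.coe_subtype]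
  rw [Subtype.ext_iff]
  rfl

theorem ComplementedWithin.comap {W : Submodule R M} (h : ComplementedWithin W)
    (N : Submodule R M) : ComplementedWithin (M := N) (W.comap N.subtype) := by
  intro P hP
  have hPm : P.map N.subtype ≤ W ⊓ N := by
    refine le_inf ?_ (Submodule.map_subtype_le _ _)
    rintro x ⟨p, hp, rfl⟩
    exact hP hp
  obtain ⟨Q, hQle, hQd, hQs⟩ := (h.of_le (inf_le_left : W ⊓ N ≤ W)) (P.map N.subtype) hPm
  refine ⟨Q.comap N.subtype, ?_, ?_, ?_⟩
  · intro x hx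
    exact (hQle hx).1
  · rw [eq_bot_iff]
    rintro x ⟨hx1, hx2⟩
    have : (x : M) ∈ (P.map N.subtype) ⊓ Q := ⟨Submodule.mem_map_of_mem hx1, hx2⟩
    rw [hQd] at this
    exact (Submodule.mem_bot R).mpr (Subtype.ext ((Submodule.mem_bot R).mp this))
  · apply le_antisymm
    · apply sup_le
      · intro x hx
        exact (hPm (Submodule.mem_map_of_mem hx)).1
      · intro x hx
        exact (hQle hx).1
    · intro x hx
      have : (x : M) ∈ (P.map N.subtype) ⊔ Q := by rw [hQs]; exact ⟨hx, x.2⟩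
      obtain ⟨p, hp, q, hq, hpq⟩ := Submodule.mem_sup.mp this
      obtain ⟨p', hp', rfl⟩ := hp
      have hqN : q ∈ N := (hQle hq).2
      have hx' : x = p' + ⟨q, hqN⟩ := Subtype.ext (by rw [← hpq]; rfl)
      rw [hx']
      exact Submodule.add_mem_sup hp' hq

theorem NoIsoPairWithin.comap {W : Submodule R M} (h : NoIsoPairWithin W)
    (N : Submodule R M) : NoIsoPairWithin (M := N) (W.comap N.subtype) := by
  intro P Q hP hQ hPne hQne hPQ
  constructor
  intro g
  have hPm : P.map N.subtype ≤ W := by rintro x ⟨p, hp, rfl⟩; exact hP hp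
  have hQm : Q.map N.subtype ≤ W := by rintro x ⟨q, hq, rfl⟩; exact hQ hq
  have hPmne : P.map N.subtype ≠ ⊥ := by
    intro hb
    apply hPne
    rw [eq_bot_iff]
    intro x hx
    have : (x : M) ∈ (⊥ : Submodule R M) := hb ▸ Submodule.mem_map_of_mem hx
    exact (Submodule.mem_bot R).mpr (Subtype.ext ((Submodule.mem_bot R).mp this))
  have hQmne : Q.map N.subtype ≠ ⊥ := by
    intro hb
    apply hQne
    rw [eq_bot_iff]
    intro x hx
    have : (x : M) ∈ (⊥ : Submodule R M) := hb ▸ Submodule.mem_map_of_mem hx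
    exact (Submodule.mem_bot R).mpr (Subtype.ext ((Submodule.mem_bot R).mp this))
  have hdm : P.map N.subtype ⊓ Q.map N.subtype = ⊥ := by
    rw [eq_bot_iff]
    rintro x ⟨hx1, hx2⟩
    obtain ⟨p, hp, rfl⟩ := hx1
    obtain ⟨q, hq, hqp⟩ := hx2
    have : q = p := Subtype.ext hqp
    subst this
    have : q ∈ P ⊓ Q := ⟨hp, hq⟩
    rw [hPQ] at this
    rw [(Submodule.mem_bot R).mp this]
    simp
  have eP := Submodule.equivMapOfInjective N.subtype N.injective_subtype P
  have eQ := Submodule.equivMapOfInjective N.subtype N.injective_subtype Q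
  exact (h _ _ hPm hQm hPmne hQmne hdm).false (eP.symm ≪≫ₗ g ≪≫ₗ eQ)

theorem c4star_of_parts (he : e * e = e)
    (h1 : ComplementedWithin (part1 M e hc))
    (h2 : NoIsoPairWithin (part2 M e hc)) : IsC4StarModule R M := by
  intro N
  apply c4_of_parts (M := N) (e := e) (hc := hc) he
  · rw [part1_comap]
    exact h1.comap N
  · rw [part2_comap]
    exact h2.comap N

section Concrete

variable (S T : Type*) [Ring S] [Ring T]

def eST : S × T := (1, 0)

theorem hcST : ∀ r : S × T, eST S T * r = r * eST S T := by
  intro r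
  simp [eST, Prod.ext_iff]

theorem heST : eST S T * eST S T = eST S T := by
  simp [eST, Prod.ext_iff]

/-- The ideal `S × 0` of `S × T`. -/
abbrev PartS : Submodule (S × T) (S × T) := part1 (S × T) (eST S T) (hcST S T)

/-- The ideal `0 × T` of `S × T`. -/
abbrev PartT : Submodule (S × T) (S × T) := part2 (S × T) (eST S T) (hcST S T)

variable {S T}

theorem mem_PartS {x : S × T} : x ∈ PartS S T ↔ x.2 = 0 := by
  rw [mem_part1]
  show eST S T * x = x ↔ _
  simp [eST, Prod.ext_iff, eq_comm]

theorem mem_PartT {x : S × T} : x ∈ PartT S T ↔ x.1 = 0 := by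
  rw [mem_part2]
  show eST S T * x = 0 ↔ _
  simp [eST, Prod.ext_iff]

variable (S T) in
def pushT (V : Submodule (S × T) (S × T)) : Submodule T T where
  carrier := Prod.snd '' (V : Set (S × T))
  add_mem' := by
    rintro a b ⟨v, hv, rfl⟩ ⟨w, hw, rfl⟩
    exact ⟨v + w, V.add_mem hv hw, rfl⟩
  zero_mem' := ⟨0, V.zero_mem, rfl⟩
  smul_mem' := by
    rintro c x ⟨v, hv, rfl⟩
    refine ⟨((0 : S), c) • v, V.smul_mem _ hv, ?_⟩
    show (((0 : S), c) * v).2 = c • v.2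
    simp

variable (S T) in
def liftT (W : Submodule T T) : Submodule (S × T) (S × T) where
  carrier := {x | x.1 = 0 ∧ x.2 ∈ W}
  add_mem' := by
    rintro a b ⟨ha1, ha2⟩ ⟨hb1, hb2⟩
    exact ⟨by rw [Prod.fst_add, ha1, hb1, add_zero], W.add_mem ha2 hb2⟩
  zero_mem' := ⟨rfl, W.zero_mem⟩
  smul_mem' := by
    rintro c x ⟨h1, h2⟩
    constructor
    · show (c * x).1 = 0
      rw [Prod.fst_mul, h1, mul_zero]
    · show (c * x).2 ∈ W
      rw [Prod.snd_mul]
      exact W.smul_mem c.2 h2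

theorem mem_pushT {V : Submodule (S × T) (S × T)} {y : T} :
    y ∈ pushT S T V ↔ ∃ v ∈ V, v.2 = y := by
  constructor
  · rintro ⟨v, hv, rfl⟩; exact ⟨v, hv, rfl⟩
  · rintro ⟨v, hv, rfl⟩; exact ⟨v, hv, rfl⟩

theorem mem_liftT {W : Submodule T T} {x : S × T} :
    x ∈ liftT S T W ↔ x.1 = 0 ∧ x.2 ∈ W := Iff.rfl

theorem mem_of_pushT {V : Submodule (S × T) (S × T)} (hV : V ≤ PartT S T) {y : T}
    (hy : y ∈ pushT S T V) : ((0 : S), y) ∈ V := by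
  obtain ⟨v, hv, rfl⟩ := mem_pushT.mp hy
  have h1 : v.1 = 0 := mem_PartT.mp (hV hv)
  have : ((0 : S), v.2) = v := Prod.ext h1.symm rfl
  rw [this]
  exact hv

theorem pushT_mono {V V' : Submodule (S × T) (S × T)} (h : V ≤ V') :
    pushT S T V ≤ pushT S T V' := by
  rintro y ⟨v, hv, rfl⟩
  exact ⟨v, h hv, rfl⟩

theorem liftT_mono {W W' : Submodule T T} (h : W ≤ W') :
    liftT S T W ≤ liftT S T W' := by
  rintro x ⟨h1, h2⟩
  exact ⟨h1, h h2⟩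

theorem liftT_le_PartT {W : Submodule T T} : liftT S T W ≤ PartT S T := by
  rintro x ⟨h1, _⟩
  exact mem_PartT.mpr h1

theorem pushT_liftT (W : Submodule T T) : pushT S T (liftT S T W) = W := by
  ext y
  constructor
  · rintro ⟨v, ⟨_, hv2⟩, rfl⟩
    exact hv2
  · intro hy
    exact ⟨((0 : S), y), ⟨rfl, hy⟩, rfl⟩

theorem liftT_pushT {V : Submodule (S × T) (S × T)} (hV : V ≤ PartT S T) :
    liftT S T (pushT S T V) = V := by
  ext x
  constructor
  · rintro ⟨h1, h2⟩
    have := mem_of_pushT hV h2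
    have hx : x = ((0 : S), x.2) := Prod.ext h1 rfl
    rw [hx]
    exact this
  · intro hx
    exact ⟨mem_PartT.mp (hV hx), ⟨x, hx, rfl⟩⟩

theorem pushT_sup (V V' : Submodule (S × T) (S × T)) :
    pushT S T (V ⊔ V') = pushT S T V ⊔ pushT S T V' := by
  apply le_antisymm
  · rintro y ⟨v, hv, rfl⟩
    obtain ⟨a, ha, b, hb, rfl⟩ := Submodule.mem_sup.mp hv
    rw [Prod.snd_add]
    exact Submodule.add_mem_sup ⟨a, ha, rfl⟩ ⟨b, hb, rfl⟩
  · exact sup_le (pushT_mono le_sup_left) (pushT_mono le_sup_right)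

theorem pushT_iSup {ι : Sort*} (V : ι → Submodule (S × T) (S × T)) :
    pushT S T (⨆ i, V i) = ⨆ i, pushT S T (V i) := by
  apply le_antisymm
  · rintro y ⟨v, hv, rfl⟩
    refine Submodule.iSup_induction (motive := fun v : S × T => v.2 ∈ ⨆ i, pushT S T (V i)) V hv
      ?_ ?_ ?_
    · intro i x hx
      exact Submodule.mem_iSup_of_mem i ⟨x, hx, rfl⟩
    · simp
    · intro a b ha hb
      rw [Prod.snd_add]
      exact Submodule.add_mem _ ha hb
  · exact iSup_le fun i => pushT_mono (le_iSup V i)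

theorem pushT_inf {V V' : Submodule (S × T) (S × T)} (hV : V ≤ PartT S T)
    (hV' : V' ≤ PartT S T) :
    pushT S T (V ⊓ V') = pushT S T V ⊓ pushT S T V' := by
  apply le_antisymm
  · exact le_inf (pushT_mono inf_le_left) (pushT_mono inf_le_right)
  · rintro y ⟨hy1, hy2⟩
    exact ⟨((0 : S), y), ⟨mem_of_pushT hV hy1, mem_of_pushT hV' hy2⟩, rfl⟩

theorem pushT_bot : pushT S T ⊥ = ⊥ := by
  ext y
  simp [mem_pushT, eq_comm]

theorem pushT_eq_bot {V : Submodule (S × T) (S × T)} (hV : V ≤ PartT S T) :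
    pushT S T V = ⊥ ↔ V = ⊥ := by
  constructor
  · intro h
    rw [eq_bot_iff]
    intro x hx
    have h2 : x.2 ∈ pushT S T V := ⟨x, hx, rfl⟩
    rw [h] at h2
    have h1 : x.1 = 0 := mem_PartT.mp (hV hx)
    have h2' : x.2 = 0 := (Submodule.mem_bot T).mp h2
    exact (Submodule.mem_bot _).mpr (Prod.ext h1 h2')
  · rintro rfl
    exact pushT_bot

theorem pushT_PartT : pushT S T (PartT S T) = ⊤ := by
  rw [eq_top_iff]
  intro y _
  exact ⟨((0 : S), y), mem_PartT.mpr rfl, rfl⟩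

theorem liftT_inf (W W' : Submodule T T) :
    liftT S T (W ⊓ W') = liftT S T W ⊓ liftT S T W' := by
  ext x
  simp only [mem_liftT, Submodule.mem_inf]
  tauto

theorem liftT_sup (W W' : Submodule T T) :
    liftT S T (W ⊔ W') = liftT S T W ⊔ liftT S T W' := by
  apply le_antisymm
  · rintro x ⟨h1, h2⟩
    obtain ⟨a, ha, b, hb, hab⟩ := Submodule.mem_sup.mp h2
    have : x = ((0 : S), a) + ((0 : S), b) := by
      rw [Prod.ext_iff]
      constructor
      · rw [h1, Prod.fst_add]; simp
      · rw [Prod.snd_add, hab]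
    rw [this]
    exact Submodule.add_mem_sup ⟨rfl, ha⟩ ⟨rfl, hb⟩
  · exact sup_le (liftT_mono le_sup_left) (liftT_mono le_sup_right)

theorem liftT_bot : liftT S T (⊥ : Submodule T T) = ⊥ := by
  ext x
  simp only [mem_liftT, Submodule.mem_bot]
  constructor
  · rintro ⟨h1, h2⟩
    exact Prod.ext h1 h2
  · rintro rfl
    exact ⟨rfl, rfl⟩

theorem liftT_top : liftT S T (⊤ : Submodule T T) = PartT S T := by
  ext x
  simp [mem_liftT, mem_PartT]

end Concrete

section ConcreteS

variable {S T : Type*} [Ring S] [Ring T]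

variable (S T) in
def pushS (V : Submodule (S × T) (S × T)) : Submodule S S where
  carrier := Prod.fst '' (V : Set (S × T))
  add_mem' := by
    rintro a b ⟨v, hv, rfl⟩ ⟨w, hw, rfl⟩
    exact ⟨v + w, V.add_mem hv hw, rfl⟩
  zero_mem' := ⟨0, V.zero_mem, rfl⟩
  smul_mem' := by
    rintro c x ⟨v, hv, rfl⟩
    refine ⟨(c, (0 : T)) • v, V.smul_mem _ hv, ?_⟩
    show ((c, (0 : T)) * v).1 = c • v.1
    simp

variable (S T) in
def liftS (W : Submodule S S) : Submodule (S × T) (S × T) where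
  carrier := {x | x.2 = 0 ∧ x.1 ∈ W}
  add_mem' := by
    rintro a b ⟨ha1, ha2⟩ ⟨hb1, hb2⟩
    exact ⟨by rw [Prod.snd_add, ha1, hb1, add_zero], W.add_mem ha2 hb2⟩
  zero_mem' := ⟨rfl, W.zero_mem⟩
  smul_mem' := by
    rintro c x ⟨h1, h2⟩
    constructor
    · show (c * x).2 = 0
      rw [Prod.snd_mul, h1, mul_zero]
    · show (c * x).1 ∈ W
      rw [Prod.fst_mul]
      exact W.smul_mem c.1 h2

theorem mem_liftS {W : Submodule S S} {x : S × T} :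
    x ∈ liftS S T W ↔ x.2 = 0 ∧ x.1 ∈ W := Iff.rfl

theorem liftS_le_PartS {W : Submodule S S} : liftS S T W ≤ PartS S T := by
  rintro x ⟨h1, _⟩
  exact mem_PartS.mpr h1

theorem liftS_pushS {V : Submodule (S × T) (S × T)} (hV : V ≤ PartS S T) :
    liftS S T (pushS S T V) = V := by
  ext x
  constructor
  · rintro ⟨h1, v, hv, hv1⟩
    have hv2 : v.2 = 0 := mem_PartS.mp (hV hv)
    have hx : x = v := Prod.ext hv1.symm (by rw [h1, hv2])
    rw [hx]
    exact hv
  · intro hx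
    exact ⟨mem_PartS.mp (hV hx), ⟨x, hx, rfl⟩⟩

theorem liftS_inf (W W' : Submodule S S) :
    liftS S T (W ⊓ W') = liftS S T W ⊓ liftS S T W' := by
  ext x
  simp only [mem_liftS, Submodule.mem_inf]
  tauto

theorem liftS_sup (W W' : Submodule S S) :
    liftS S T (W ⊔ W') = liftS S T W ⊔ liftS S T W' := by
  apply le_antisymm
  · rintro x ⟨h1, h2⟩
    obtain ⟨a, ha, b, hb, hab⟩ := Submodule.mem_sup.mp h2
    have : x = (a, (0 : T)) + (b, (0 : T)) := by
      rw [Prod.ext_iff]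
      constructor
      · rw [Prod.fst_add, hab]
      · rw [h1, Prod.snd_add]; simp
    rw [this]
    exact Submodule.add_mem_sup ⟨rfl, ha⟩ ⟨rfl, hb⟩
  · refine sup_le ?_ ?_ <;> rintro x ⟨h1, h2⟩
    · exact ⟨h1, Submodule.mem_sup_left h2⟩
    · exact ⟨h1, Submodule.mem_sup_right h2⟩

theorem liftS_bot : liftS S T (⊥ : Submodule S S) = ⊥ := by
  ext x
  simp only [mem_liftS, Submodule.mem_bot]
  constructor
  · rintro ⟨h1, h2⟩
    exact Prod.ext h2 h1
  · rintro rfl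
    exact ⟨rfl, rfl⟩

theorem liftS_top : liftS S T (⊤ : Submodule S S) = PartS S T := by
  ext x
  simp [mem_liftS, mem_PartS]

theorem cw_PartS (hS : IsSemisimpleRing S) : ComplementedWithin (PartS S T) := by
  intro P hP
  haveI := hS
  obtain ⟨Q', hQ'⟩ := exists_isCompl (pushS S T P)
  refine ⟨liftS S T Q', liftS_le_PartS, ?_, ?_⟩
  · rw [← liftS_pushS hP, ← liftS_inf, disjoint_iff.mp hQ'.disjoint, liftS_bot]
  · rw [← liftS_pushS hP, ← liftS_sup, codisjoint_iff.mp hQ'.codisjoint, liftS_top]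

end ConcreteS

section PushEquiv

variable {S T : Type*} [Ring S] [Ring T]

set_option maxHeartbeats 1000000 in
def pushEquiv {P Q : Submodule (S × T) (S × T)} (hP : P ≤ PartT S T) (hQ : Q ≤ PartT S T)
    (g : P ≃ₗ[S × T] Q) : (pushT S T P) ≃ₗ[T] (pushT S T Q) where
  toFun y := ⟨(g ⟨((0 : S), y.1), mem_of_pushT hP y.2⟩ : S × T).2,
    ⟨(g ⟨((0 : S), y.1), mem_of_pushT hP y.2⟩ : S × T), (g _).2, rfl⟩⟩
  invFun y := ⟨(g.symm ⟨((0 : S), y.1), mem_of_pushT hQ y.2⟩ : S × T).2,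
    ⟨(g.symm ⟨((0 : S), y.1), mem_of_pushT hQ y.2⟩ : S × T), (g.symm _).2, rfl⟩⟩
  map_add' a b := by
    have harg : (⟨((0 : S), ((a + b : pushT S T P) : T)), mem_of_pushT hP (a + b).2⟩ : P)
        = ⟨((0 : S), (a : T)), mem_of_pushT hP a.2⟩ + ⟨((0 : S), (b : T)), mem_of_pushT hP b.2⟩ := by
      apply Subtype.ext
      show ((0 : S), ((a + b : pushT S T P) : T)) = ((0 : S), (a : T)) + ((0 : S), (b : T))
      rw [Prod.ext_iff]
      constructor
      · simp
      · rfl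
    apply Subtype.ext
    show (g _ : S × T).2 = _
    rw [harg, map_add]
    rfl
  map_smul' c y := by
    have harg : (⟨((0 : S), ((c • y : pushT S T P) : T)), mem_of_pushT hP (c • y).2⟩ : P)
        = ((0 : S), c) • ⟨((0 : S), (y : T)), mem_of_pushT hP y.2⟩ := by
      apply Subtype.ext
      show ((0 : S), ((c • y : pushT S T P) : T)) = ((0 : S), c) * ((0 : S), (y : T))
      rw [Prod.ext_iff]
      constructor
      · simp
      · show c • (y : T) = c * (y : T)
        rw [smul_eq_mul]
    apply Subtype.ext
    show (g _ : S × T).2 = _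
    rw [harg, map_smul]
    rfl
  left_inv y := by
    apply Subtype.ext
    set x₀ : P := ⟨((0 : S), (y : T)), mem_of_pushT hP y.2⟩ with hx₀
    show (g.symm ⟨((0 : S), (g x₀ : S × T).2), _⟩ : S × T).2 = (y : T)
    have harg : (⟨((0 : S), (g x₀ : S × T).2), mem_of_pushT hQ ⟨(g x₀ : S × T), (g x₀).2, rfl⟩⟩ : Q)
        = g x₀ := by
      apply Subtype.ext
      exact Prod.ext (mem_PartT.mp (hQ (g x₀).2)).symm rfl
    rw [harg, g.symm_apply_apply]
  right_inv y := by
    apply Subtype.ext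
    set x₀ : Q := ⟨((0 : S), (y : T)), mem_of_pushT hQ y.2⟩ with hx₀
    show (g ⟨((0 : S), (g.symm x₀ : S × T).2), _⟩ : S × T).2 = (y : T)
    have harg : (⟨((0 : S), (g.symm x₀ : S × T).2),
          mem_of_pushT hP ⟨(g.symm x₀ : S × T), (g.symm x₀).2, rfl⟩⟩ : P)
        = g.symm x₀ := by
      apply Subtype.ext
      exact Prod.ext (mem_PartT.mp (hP (g.symm x₀).2)).symm rfl
    rw [harg, g.apply_symm_apply]

theorem pushEquiv_coe {P Q : Submodule (S × T) (S × T)} (hP : P ≤ PartT S T)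
    (hQ : Q ≤ PartT S T) (g : P ≃ₗ[S × T] Q) (y : pushT S T P) :
    (pushEquiv hP hQ g y : T) = (g ⟨((0 : S), (y : T)), mem_of_pushT hP y.2⟩ : S × T).2 := rfl

theorem nip_PartT (hsq : IsSquareFreeModule T T) : NoIsoPairWithin (PartT S T) := by
  intro P Q hP hQ hPne hQne hPQ
  constructor
  intro g
  refine (hsq (pushT S T P) (pushT S T Q) ?_ ?_ ?_).false (pushEquiv hP hQ g)
  · rw [Ne, pushT_eq_bot hP]; exact hPne
  · rw [Ne, pushT_eq_bot hQ]; exact hQne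
  · rw [← pushT_inf hP hQ, hPQ, pushT_bot]

theorem c4star_ST (hS : IsSemisimpleRing S) (hsq : IsSquareFreeModule T T) :
    IsC4StarModule (S × T) (S × T) :=
  c4star_of_parts (heST S T) (cw_PartS hS) (nip_PartT hsq)

end PushEquiv

section GeneralMore

variable {R M : Type*} [Ring R] [AddCommGroup M] [Module R M]
variable {e : R} {hc : ∀ r : R, e * r = r * e}

set_option maxHeartbeats 1000000 in
def infPart2Equiv {X Y : Submodule R M} (g : X ≃ₗ[R] Y) :
    (X ⊓ part2 M e hc : Submodule R M) ≃ₗ[R] (Y ⊓ part2 M e hc : Submodule R M) where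
  toFun x := ⟨(g ⟨x.1, x.2.1⟩ : M), (g ⟨x.1, x.2.1⟩).2, by
      have h0 : e • (⟨x.1, x.2.1⟩ : X) = 0 := Subtype.ext (by simpa using mem_part2.mp x.2.2)
      have h1 : e • g ⟨x.1, x.2.1⟩ = 0 := by rw [← map_smul, h0, map_zero]
      have := congrArg Subtype.val h1
      exact mem_part2.mpr (by simpa using this)⟩
  invFun y := ⟨(g.symm ⟨y.1, y.2.1⟩ : M), (g.symm ⟨y.1, y.2.1⟩).2, by
      have h0 : e • (⟨y.1, y.2.1⟩ : Y) = 0 := Subtype.ext (by simpa using mem_part2.mp y.2.2)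
      have h1 : e • g.symm ⟨y.1, y.2.1⟩ = 0 := by rw [← map_smul, h0, map_zero]
      have := congrArg Subtype.val h1
      exact mem_part2.mpr (by simpa using this)⟩
  map_add' a b := by
    apply Subtype.ext
    show (g ⟨(a + b).1, _⟩ : M) = (g ⟨a.1, _⟩ : M) + (g ⟨b.1, _⟩ : M)
    have harg : (⟨(a + b).1, (a + b).2.1⟩ : X) = ⟨a.1, a.2.1⟩ + ⟨b.1, b.2.1⟩ :=
      Subtype.ext rfl
    rw [harg, map_add]
    rfl
  map_smul' c x := by
    apply Subtype.ext
    show (g ⟨(c • x).1, _⟩ : M) = c • (g ⟨x.1, _⟩ : M)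
    have harg : (⟨(c • x).1, (c • x).2.1⟩ : X) = c • ⟨x.1, x.2.1⟩ := Subtype.ext rfl
    rw [harg, map_smul]
    rfl
  left_inv x := by
    apply Subtype.ext
    show (g.symm ⟨(g ⟨x.1, x.2.1⟩ : M), _⟩ : M) = x.1
    have harg : (⟨((g ⟨x.1, x.2.1⟩ : Y) : M), (g ⟨x.1, x.2.1⟩).2⟩ : Y) = g ⟨x.1, x.2.1⟩ :=
      Subtype.ext rfl
    rw [harg, g.symm_apply_apply]
  right_inv y := by
    apply Subtype.ext
    show (g ⟨(g.symm ⟨y.1, y.2.1⟩ : M), _⟩ : M) = y.1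
    have harg : (⟨((g.symm ⟨y.1, y.2.1⟩ : X) : M), (g.symm ⟨y.1, y.2.1⟩).2⟩ : X)
        = g.symm ⟨y.1, y.2.1⟩ := Subtype.ext rfl
    rw [harg, g.apply_symm_apply]

theorem infPart2Equiv_coe {X Y : Submodule R M} (g : X ≃ₗ[R] Y)
    (x : (X ⊓ part2 M e hc : Submodule R M)) :
    (infPart2Equiv g x : M) = (g ⟨x.1, x.2.1⟩ : M) := rfl

theorem compl_within_part2_of_summand (he : e * e = e) {X W : Submodule R M}
    (hXW : IsCompl X W) :
    ∃ V, V ≤ part2 M e hc ∧ (X ⊓ part2 M e hc) ⊓ V = ⊥ ∧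
      (X ⊓ part2 M e hc) ⊔ V = part2 M e hc := by
  set U : Submodule R M := W ⊔ (X ⊓ part1 M e hc) with hU
  have hdU : (X ⊓ part2 M e hc) ⊓ U = ⊥ := by
    rw [eq_bot_iff]
    rintro x ⟨hx1, hx2⟩
    obtain ⟨w, hw, u, hu, hwu⟩ := Submodule.mem_sup.mp hx2
    have hwX : w ∈ X ⊓ W := by
      constructor
      · have : w = x - u := by rw [← hwu]; abel
        rw [this]
        exact Submodule.sub_mem _ hx1.1 hu.1
      · exact hw
    rw [disjoint_iff.mp hXW.disjoint] at hwX
    have hw0 : w = 0 := (Submodule.mem_bot R).mp hwX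
    have hxu : x = u := by rw [← hwu, hw0, zero_add]
    have : x ∈ part1 M e hc ⊓ part2 M e hc := ⟨hxu ▸ hu.2, hx1.2⟩
    rw [part1_inf_part2] at this
    exact this
  refine ⟨U ⊓ part2 M e hc, inf_le_right, ?_, ?_⟩
  · rw [eq_bot_iff, ← hdU]
    exact le_inf inf_le_left (inf_le_right.trans inf_le_left)
  · rw [← sup_inf_assoc_of_le U (inf_le_right : X ⊓ part2 M e hc ≤ part2 M e hc)]
    have htop : (X ⊓ part2 M e hc) ⊔ U = ⊤ := by
      rw [hU, ← sup_assoc, sup_comm (X ⊓ part2 M e hc) W, sup_assoc,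
        sup_comm (X ⊓ part2 M e hc) (X ⊓ part1 M e hc), split_sup he X]
      rw [sup_comm]
      exact codisjoint_iff.mp hXW.codisjoint
    rw [htop, top_inf_eq]

end GeneralMore

section SemisimplePush

variable {S T : Type*} [Ring S] [Ring T]

def sndMap (V : Submodule (S × T) (S × T)) : V →ₛₗ[RingHom.snd S T] (pushT S T V) where
  toFun x := ⟨(x : S × T).2, ⟨(x : S × T), x.2, rfl⟩⟩
  map_add' a b := Subtype.ext rfl
  map_smul' c x := Subtype.ext rfl

theorem sndMap_bijective {V : Submodule (S × T) (S × T)} (hV : V ≤ PartT S T) :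
    Function.Bijective (sndMap V) := by
  constructor
  · intro a b hab
    apply Subtype.ext
    apply Prod.ext
    · rw [mem_PartT.mp (hV a.2), mem_PartT.mp (hV b.2)]
    · exact congrArg Subtype.val hab
  · rintro ⟨y, v, hv, rfl⟩
    exact ⟨⟨v, hv⟩, Subtype.ext rfl⟩

theorem isSemisimple_pushT {V : Submodule (S × T) (S × T)} (hV : V ≤ PartT S T)
    (h : IsSemisimpleModule (S × T) V) : IsSemisimpleModule T (pushT S T V) :=
  (LinearMap.isSemisimpleModule_iff_of_bijective (sndMap V) (sndMap_bijective hV)).mp h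

end SemisimplePush

section TripleT

variable {S T : Type*} [Ring S] [Ring T]

set_option maxHeartbeats 1000000 in
def tripleT (t : SWTriple (S × T) (S × T)) : SWTriple T T where
  X := pushT S T (t.X ⊓ PartT S T)
  Y := pushT S T (t.Y ⊓ PartT S T)
  semisimpleX := by
    haveI := t.semisimpleX
    refine isSemisimple_pushT inf_le_right ?_
    exact IsSemisimpleModule.congr
      (Submodule.comapSubtypeEquivOfLe (inf_le_left : t.X ⊓ PartT S T ≤ t.X)).symm
  semisimpleY := by
    haveI := t.semisimpleY
    refine isSemisimple_pushT inf_le_right ?_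
    exact IsSemisimpleModule.congr
      (Submodule.comapSubtypeEquivOfLe (inf_le_left : t.Y ⊓ PartT S T ≤ t.Y)).symm
  summandX := by
    obtain ⟨W, hW⟩ := t.summandX
    obtain ⟨V, hV2, hd, hs⟩ := compl_within_part2_of_summand (heST S T) hW
    exact ⟨pushT S T V, disjoint_iff.mpr (by rw [← pushT_inf inf_le_right hV2, hd, pushT_bot]),
      codisjoint_iff.mpr (by rw [← pushT_sup, hs, pushT_PartT])⟩
  summandY := by
    obtain ⟨W, hW⟩ := t.summandY
    obtain ⟨V, hV2, hd, hs⟩ := compl_within_part2_of_summand (heST S T) hW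
    exact ⟨pushT S T V, disjoint_iff.mpr (by rw [← pushT_inf inf_le_right hV2, hd, pushT_bot]),
      codisjoint_iff.mpr (by rw [← pushT_sup, hs, pushT_PartT])⟩
  disj := by
    have hb : (t.X ⊓ PartT S T) ⊓ (t.Y ⊓ PartT S T) = ⊥ := by
      rw [eq_bot_iff, ← t.disj]
      exact le_inf (inf_le_left.trans inf_le_left) (inf_le_right.trans inf_le_left)
    rw [← pushT_inf inf_le_right inf_le_right, hb, pushT_bot]
  f := pushEquiv inf_le_right inf_le_right (infPart2Equiv t.f)

set_option maxHeartbeats 1000000 in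
theorem tripleT_f_coe (t : SWTriple (S × T) (S × T)) (z : (tripleT t).X) :
    ((tripleT t).f z : T)
      = (t.f ⟨((0 : S), (z : T)), (mem_of_pushT inf_le_right z.2).1⟩ : S × T).2 := rfl

set_option maxHeartbeats 1000000 in
theorem tripleT_extends {t s : SWTriple (S × T) (S × T)} (h : SWTriple.Extends t s) :
    SWTriple.Extends (tripleT t) (tripleT s) := by
  obtain ⟨hX, hY, hf⟩ := h
  refine ⟨pushT_mono (inf_le_inf_right _ hX), pushT_mono (inf_le_inf_right _ hY), ?_⟩
  intro x
  rw [tripleT_f_coe t x, tripleT_f_coe s ⟨(x : T), pushT_mono (inf_le_inf_right _ hX) x.2⟩]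
  exact congrArg Prod.snd (hf ⟨((0 : S), (x : T)), (mem_of_pushT inf_le_right x.2).1⟩)

theorem assemble (hS : IsSemisimpleRing S) {Z : Submodule (S × T) (S × T)}
    {A₂ : Submodule T T} (hA₂sum : IsDirectSummand A₂)
    (hess : IsEssentialIn (pushT S T (Z ⊓ PartT S T)) A₂) :
    ∃ A : Submodule (S × T) (S × T), IsDirectSummand A ∧ IsEssentialIn Z A := by
  set Z₁ := Z ⊓ PartS S T with hZ₁
  set Z₂ := Z ⊓ PartT S T with hZ₂
  obtain ⟨Q₁, hQ₁le, hQ₁d, hQ₁s⟩ := cw_PartS (T := T) hS Z₁ inf_le_right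
  obtain ⟨D₂, hD₂⟩ := hA₂sum
  refine ⟨Z₁ ⊔ liftT S T A₂, ⟨Q₁ ⊔ liftT S T D₂, isCompl_parts (heST S T) inf_le_right hQ₁le
    liftT_le_PartT liftT_le_PartT hQ₁d ?_ hQ₁s ?_⟩, ?_, ?_⟩
  · rw [← liftT_inf, disjoint_iff.mp hD₂.disjoint, liftT_bot]
  · rw [← liftT_sup, codisjoint_iff.mp hD₂.codisjoint, liftT_top]
  · have h2 : Z₂ ≤ liftT S T A₂ := by
      have h3 := liftT_mono (S := S) hess.1
      rwa [liftT_pushT (inf_le_right : Z₂ ≤ PartT S T)] at h3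
    calc Z = Z₁ ⊔ Z₂ := (split_sup (heST S T) Z).symm
    _ ≤ Z₁ ⊔ liftT S T A₂ := sup_le_sup_left h2 _
  · intro N hN hNne
    have hsplitN := split_sup (M := S × T) (hc := hcST S T) (heST S T) N
    have hN1 : N ⊓ PartS S T ≤ Z₁ := by
      calc N ⊓ PartS S T ≤ (Z₁ ⊔ liftT S T A₂) ⊓ PartS S T := inf_le_inf_right _ hN
      _ = Z₁ := inf_part1_of_le (heST S T) inf_le_right liftT_le_PartT
    have hN2 : N ⊓ PartT S T ≤ liftT S T A₂ := by
      calc N ⊓ PartT S T ≤ (Z₁ ⊔ liftT S T A₂) ⊓ PartT S T := inf_le_inf_right _ hN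
      _ = liftT S T A₂ := inf_part2_of_le (heST S T) inf_le_right liftT_le_PartT
    by_cases hc1 : N ⊓ PartS S T = ⊥
    · have hc2 : N ⊓ PartT S T ≠ ⊥ := by
        intro hc2
        apply hNne
        rw [← hsplitN, hc1, hc2, sup_bot_eq]
      have hple : pushT S T (N ⊓ PartT S T) ≤ A₂ := by
        have h4 := pushT_mono hN2
        rwa [pushT_liftT] at h4
      have hpne : pushT S T (N ⊓ PartT S T) ≠ ⊥ := by
        rw [Ne, pushT_eq_bot inf_le_right]
        exact hc2
      have h5 := hess.2 _ hple hpne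
      rw [← pushT_inf inf_le_right inf_le_right] at h5
      intro hzn
      apply h5
      have h6 : Z₂ ⊓ (N ⊓ PartT S T) = ⊥ := by
        rw [eq_bot_iff, ← hzn]
        exact le_inf (inf_le_left.trans inf_le_left) (inf_le_right.trans inf_le_left)
      rw [h6, pushT_bot]
    · intro hzn
      apply hc1
      rw [eq_bot_iff, ← hzn]
      exact le_inf (hN1.trans inf_le_left) inf_le_left

theorem semiweakCS_ST (hS : IsSemisimpleRing S) (hsw : IsSemiWeakCS T T) :
    IsSemiWeakCS (S × T) (S × T) := by
  intro C hC
  have hC' : IsChain SWTriple.Extends (tripleT '' C) :=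
    hC.image_of_map_rel _ _ _ (fun a b hab => tripleT_extends hab)
  obtain ⟨A₂, B₂, hA₂sum, hB₂sum, hA₂ess, hB₂ess⟩ := hsw _ hC'
  -- identification of suprema
  have conv1 : ∀ g : SWTriple (S × T) (S × T) → Submodule (S × T) (S × T),
      (⨆ t ∈ C, g t) = ⨆ t : C, g t.1 := by
    intro g
    rw [iSup_subtype']
  have conv1T : ∀ g : SWTriple (S × T) (S × T) → Submodule T T,
      (⨆ t ∈ C, g t) = ⨆ t : C, g t.1 := by
    intro g
    rw [iSup_subtype']
  have keyX : (⨆ t ∈ tripleT '' C, t.X) = pushT S T ((⨆ t ∈ C, t.X) ⊓ PartT S T) := by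
    have h1 : (⨆ t ∈ C, t.X)
        = (⨆ t : C, (t.1.X ⊓ PartS S T)) ⊔ (⨆ t : C, (t.1.X ⊓ PartT S T)) := by
      rw [conv1 (fun t => t.X), ← iSup_sup_eq]
      exact (iSup_congr fun t => (split_sup (heST S T) t.1.X).symm)
    have h2 : (⨆ t ∈ C, t.X) ⊓ PartT S T = ⨆ t : C, (t.1.X ⊓ PartT S T) := by
      rw [h1]
      exact inf_part2_of_le (heST S T) (iSup_le fun t => inf_le_right)
        (iSup_le fun t => inf_le_right)
    calc ⨆ t ∈ tripleT '' C, t.X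
        = ⨆ t ∈ C, (tripleT t).X := by rw [iSup_image]
      _ = ⨆ t : C, pushT S T (t.1.X ⊓ PartT S T) := conv1T (fun t => (tripleT t).X)
      _ = pushT S T (⨆ t : C, (t.1.X ⊓ PartT S T)) := (pushT_iSup _).symm
      _ = pushT S T ((⨆ t ∈ C, t.X) ⊓ PartT S T) := by rw [h2]
  have keyY : (⨆ t ∈ tripleT '' C, t.Y) = pushT S T ((⨆ t ∈ C, t.Y) ⊓ PartT S T) := by
    have h1 : (⨆ t ∈ C, t.Y)
        = (⨆ t : C, (t.1.Y ⊓ PartS S T)) ⊔ (⨆ t : C, (t.1.Y ⊓ PartT S T)) := by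
      rw [conv1 (fun t => t.Y), ← iSup_sup_eq]
      exact (iSup_congr fun t => (split_sup (heST S T) t.1.Y).symm)
    have h2 : (⨆ t ∈ C, t.Y) ⊓ PartT S T = ⨆ t : C, (t.1.Y ⊓ PartT S T) := by
      rw [h1]
      exact inf_part2_of_le (heST S T) (iSup_le fun t => inf_le_right)
        (iSup_le fun t => inf_le_right)
    calc ⨆ t ∈ tripleT '' C, t.Y
        = ⨆ t ∈ C, (tripleT t).Y := by rw [iSup_image]
      _ = ⨆ t : C, pushT S T (t.1.Y ⊓ PartT S T) := conv1T (fun t => (tripleT t).Y)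
      _ = pushT S T (⨆ t : C, (t.1.Y ⊓ PartT S T)) := (pushT_iSup _).symm
      _ = pushT S T ((⨆ t ∈ C, t.Y) ⊓ PartT S T) := by rw [h2]
  rw [keyX] at hA₂ess
  rw [keyY] at hB₂ess
  obtain ⟨A, hAsum, hAess⟩ := assemble hS hA₂sum hA₂ess
  obtain ⟨B, hBsum, hBess⟩ := assemble hS hB₂sum hB₂ess
  exact ⟨A, B, hAsum, hBsum, hAess, hBess⟩

end TripleT

end C4Aux

/-- Let `R = S × T` be a strongly right `C4*`-ring, where `S` is semisimple
artinian, the right regular module `T_T` is summand-square-free, `T` satisfies `LSF`, and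
the left regular module `_TT` is semi-weak-CS. Then `R` is a strongly left `C4*`-ring. -/
theorem right_to_left_semiweak {S T : Type*} [Ring S] [Ring T]
    (h : IsStronglyRightC4StarRing (S × T))
    (hS : IsSemisimpleRing S)
    (hssf : IsSummandSquareFree Tᵐᵒᵖ T)
    (hlsf : LSF T)
    (hswcs : IsSemiWeakCS T T) :
    IsStronglyLeftC4StarRing (S × T) := by
  have hsq : IsSquareFreeModule T T := hlsf hssf
  exact ⟨C4Aux.semiweakCS_ST hS hswcs, C4Aux.c4star_ST hS hsq⟩
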